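/- There exists n₀ such that the following holds for all n ≥ n₀ and all λ ∈ ℕ. Suppose C is an oriented cycle on n vertices having exactly λ vertices of out-degree 0. Let μ₀, μ₂ ∈ ℕ with μ₀ + μ₂ = ⌈2λ/log n⌉ and let μ₁ = ⌈(n − 2λ)/log n⌉. Then there exists a path P ⊆ C of length at most n/100 and vertex sets Z₀, Z₁, Z₂ ⊆ V(P) such that: (i) the vertices in Z₀ ∪ Z₁ ∪ Z₂ are pairwise at distance at least 100 log n/loglog n from each other along P, and (ii) for each i ∈ {0,1,2}, |Z_i| = μ_i and every vertex of Z_i has out-degree i in C. -/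

import Mathlib

/-- The out-degree of the vertex `i` in the oriented `n`-cycle with vertex set `ZMod n`
whose edge `{j, j+1}` is directed `j → j+1` iff `σ j = true`. -/
def cycleOutDeg {n : ℕ} (σ : ZMod n → Bool) (i : ZMod n) : ℕ :=
  (if σ i then 1 else 0) + (if σ (i - 1) then 0 else 1)

open Finset

/-- counting a separated set inside an interval -/
lemma sep_card_le (S : Finset ℕ) (g lo len : ℕ) (hg : 1 ≤ g)
    (hsep : ∀ x ∈ S, ∀ y ∈ S, x < y → x + g ≤ y)
    (hsub : ∀ x ∈ S, lo ≤ x ∧ x < lo + len) :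
    S.card ≤ (len - 1) / g + 1 := by
  classical
  have key := Finset.card_le_card_of_injOn (s := S) (fun x => (x - lo) / g)
    (t := Finset.range ((len - 1) / g + 1)) ?_ ?_
  · simpa using key
  · intro x hx
    simp only [Finset.mem_coe, Finset.mem_range]
    have h := hsub x hx
    have h2 : x - lo ≤ len - 1 := by omega
    exact lt_of_le_of_lt (Nat.div_le_div_right h2) (Nat.lt_succ_self _)
  · intro x hx y hy hxy
    have hxy' : (x - lo)/g = (y - lo)/g := hxy
    rcases lt_trichotomy x y with h | h | h
    · exfalso
      have h1 := hsep x (by simpa using hx) y (by simpa using hy) h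
      have hlo := (hsub x (by simpa using hx)).1
      have h2 : (x - lo) + g ≤ y - lo := by omega
      have h3 : (x - lo)/g + 1 ≤ (y - lo)/g := by
        calc (x - lo)/g + 1 = ((x - lo) + g)/g := (Nat.add_div_right _ hg).symm
        _ ≤ (y - lo)/g := Nat.div_le_div_right h2
      omega
    · exact h
    · exfalso
      have h1 := hsep y (by simpa using hy) x (by simpa using hx) h
      have hlo := (hsub y (by simpa using hy)).1
      have h2 : (y - lo) + g ≤ x - lo := by omega
      have h3 : (y - lo)/g + 1 ≤ (x - lo)/g := by
        calc (y - lo)/g + 1 = ((y - lo) + g)/g := (Nat.add_div_right _ hg).symm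
        _ ≤ (x - lo)/g := Nat.div_le_div_right h2
      omega

/-- spaced selection from a separated set -/
lemma sel (r g : ℕ) (hg : 1 ≤ g) (hr : 1 ≤ r) :
    ∀ (k : ℕ) (S : Finset ℕ), (∀ x ∈ S, ∀ y ∈ S, x < y → x + g ≤ y) →
    r * k < S.card + r →
    ∃ T ⊆ S, T.card = k ∧ (∀ x ∈ T, ∀ y ∈ T, x < y → x + r * g ≤ y) := by
  intro k
  induction k with
  | zero => intro S _ _; exact ⟨∅, by simp⟩
  | succ k ih =>
    intro S hsep hcard
    have hSne : S.Nonempty := by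
      rw [← Finset.card_pos]
      have h : r * (k+1) = r * k + r := by ring
      omega
    set m := S.min' hSne with hm
    have hmS : m ∈ S := S.min'_mem hSne
    classical
    set S' := S.filter (fun x => m + r * g ≤ x) with hS'
    have hsub' : S' ⊆ S := Finset.filter_subset _ _
    have hsmall : (S.filter (fun x => ¬ (m + r * g ≤ x))).card ≤ r := by
      have := sep_card_le (S.filter (fun x => ¬ (m + r * g ≤ x))) g m (r * g) hg
        (fun x hx y hy hxy => hsep x (Finset.filter_subset _ _ hx) y (Finset.filter_subset _ _ hy) hxy)
        (by
          intro x hx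
          rw [Finset.mem_filter] at hx
          exact ⟨S.min'_le x hx.1, by omega⟩)
      have h2 : (r * g - 1) / g + 1 ≤ r := by
        have hrg : 1 ≤ r * g := Nat.one_le_iff_ne_zero.mpr (by positivity)
        have : (r * g - 1) / g < r := by
          rw [Nat.div_lt_iff_lt_mul (by omega : 0 < g)]
          calc r * g - 1 < r * g := by omega
          _ = r * g := by ring
        omega
      omega
    have hcards : S.card ≤ S'.card + r := by
      rw [hS']
      have := Finset.card_filter_add_card_filter_not (s := S)
        (p := fun x => m + r * g ≤ x)
      omega
    obtain ⟨T', hT'sub, hT'card, hT'sep⟩ := ih S'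
      (fun x hx y hy hxy => hsep x (hsub' hx) y (hsub' hy) hxy)
      (by have h : r * (k+1) = r * k + r := by ring
          omega)
    have hmnotin : m ∉ T' := by
      intro hmem
      have := hT'sub hmem
      rw [hS', Finset.mem_filter] at this
      have := this.2
      nlinarith
    refine ⟨insert m T', ?_, ?_, ?_⟩
    · intro x hx
      rcases Finset.mem_insert.mp hx with rfl | hx
      · exact hmS
      · exact hsub' (hT'sub hx)
    · rw [Finset.card_insert_of_notMem hmnotin, hT'card]
    · intro x hx y hy hxy
      rcases Finset.mem_insert.mp hx with rfl | hx <;>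
        rcases Finset.mem_insert.mp hy with rfl | hy
      · omega
      · have := hT'sub hy; rw [hS', Finset.mem_filter] at this; omega
      · have := hT'sub hx; rw [hS', Finset.mem_filter] at this
        have hxm : m ≤ x := S.min'_le x (hsub' (hT'sub hx))
        omega
      · exact hT'sep x hx y hy hxy
open Finset


/-- descents vs ascents in an interval -/
lemma alt (b : ℕ → Bool) (u : ℕ) (hu : 1 ≤ u) (v : ℕ) :
    (((Finset.Icc u v).filter (fun j => b (j-1) = true ∧ b j = false)).card ≤
    ((Finset.Icc u v).filter (fun j => b (j-1) = false ∧ b j = true)).card + 1) ∧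
    (b v = true → ((Finset.Icc u v).filter (fun j => b (j-1) = true ∧ b j = false)).card ≤
      ((Finset.Icc u v).filter (fun j => b (j-1) = false ∧ b j = true)).card) := by
  classical
  induction v with
  | zero =>
    have he : Finset.Icc u 0 = ∅ := by
      rw [Finset.Icc_eq_empty_iff]; omega
    simp [he]
  | succ v ih =>
    by_cases hvu : u ≤ v + 1
    · have hins : Finset.Icc u (v+1) = insert (v+1) (Finset.Icc u v) := by
        ext x; simp only [Finset.mem_Icc, Finset.mem_insert]; omega
      have hnot : (v+1) ∉ Finset.Icc u v := by simp [Finset.mem_Icc]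
      have hnotd : ∀ p : ℕ → Prop, (v+1) ∉ (Finset.Icc u v).filter (fun j => p j) := by
        intro p hmem; exact hnot (Finset.mem_filter.mp hmem).1
      have hsimp : v + 1 - 1 = v := by omega
      rw [hins, Finset.filter_insert, Finset.filter_insert]
      have hni : ∀ {p : ℕ → Prop} {inst : DecidablePred p}, (v+1) ∉ (Finset.Icc u v).filter p :=
        fun h => hnot (Finset.mem_filter.mp h).1
      rcases hbv : b v <;> rcases hbv1 : b (v+1)
      · rw [if_neg (by simp [hsimp, hbv]), if_neg (by simp [hbv1])]
        exact ⟨ih.1, by simp [hbv1]⟩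
      · rw [if_neg (by simp [hbv1]), if_pos (by simp [hsimp, hbv, hbv1])]
        rw [Finset.card_insert_of_notMem hni]
        exact ⟨by have := ih.1; omega, fun _ => by have := ih.1; omega⟩
      · rw [if_pos (by simp [hsimp, hbv, hbv1]), if_neg (by simp [hbv1])]
        rw [Finset.card_insert_of_notMem hni]
        exact ⟨by have := ih.2 hbv; omega, by simp [hbv1]⟩
      · rw [if_neg (by simp [hbv1]), if_neg (by simp [hsimp, hbv])]
        exact ⟨ih.1, fun _ => ih.2 hbv⟩
    · have he : Finset.Icc u (v+1) = ∅ := by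
        rw [Finset.Icc_eq_empty_iff]; omega
      simp [he]

lemma deg_char {n : ℕ} (σ : ZMod n → Bool) (a : ZMod n) (j : ℕ) (hj : 1 ≤ j) :
    cycleOutDeg σ (a + (j:ZMod n)) =
      (if σ (a + (j:ZMod n)) then 1 else 0) +
      (if σ (a + ((j-1:ℕ):ZMod n)) then 0 else 1) := by
  obtain ⟨k, rfl⟩ : ∃ k, j = k + 1 := ⟨j - 1, by omega⟩
  have hkey : (a + ((k+1:ℕ):ZMod n)) - 1 = a + ((k+1-1:ℕ):ZMod n) := by
    have : k + 1 - 1 = k := by omega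
    rw [this]; push_cast; ring
  rw [cycleOutDeg, hkey]

lemma deg0_iff {n : ℕ} (σ : ZMod n → Bool) (a : ZMod n) (j : ℕ) (hj : 1 ≤ j) :
    cycleOutDeg σ (a + (j:ZMod n)) = 0 ↔
      (σ (a + ((j-1:ℕ):ZMod n)) = true ∧ σ (a + (j:ZMod n)) = false) := by
  rw [deg_char σ a j hj]
  rcases h1 : σ (a + (j:ZMod n)) <;> rcases h2 : σ (a + ((j-1:ℕ):ZMod n)) <;> simp [h1, h2]

lemma deg2_iff {n : ℕ} (σ : ZMod n → Bool) (a : ZMod n) (j : ℕ) (hj : 1 ≤ j) :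
    cycleOutDeg σ (a + (j:ZMod n)) = 2 ↔
      (σ (a + ((j-1:ℕ):ZMod n)) = false ∧ σ (a + (j:ZMod n)) = true) := by
  rw [deg_char σ a j hj]
  rcases h1 : σ (a + (j:ZMod n)) <;> rcases h2 : σ (a + ((j-1:ℕ):ZMod n)) <;> simp [h1, h2]

lemma deg_le_two {n : ℕ} (σ : ZMod n → Bool) (i : ZMod n) :
    cycleOutDeg σ i = 0 ∨ cycleOutDeg σ i = 1 ∨ cycleOutDeg σ i = 2 := by
  rw [cycleOutDeg]
  rcases σ i <;> rcases σ (i - 1) <;> simp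

/-- window count -/
def wc {n : ℕ} (σ : ZMod n → Bool) (a : ZMod n) (t u v : ℕ) : ℕ :=
  ((Finset.Icc u v).filter (fun (j : ℕ) => cycleOutDeg σ (a + (j:ZMod n)) = t)).card

lemma wc_partition {n : ℕ} (σ : ZMod n → Bool) (a : ZMod n) (u v : ℕ) :
    (Finset.Icc u v).card = wc σ a 0 u v + wc σ a 1 u v + wc σ a 2 u v := by
  classical
  rw [wc, wc, wc]
  have h1 := Finset.card_filter_add_card_filter_not (s := Finset.Icc u v)
    (p := fun j => cycleOutDeg σ (a + (j:ZMod n)) = 0)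
  have h2 := Finset.card_filter_add_card_filter_not
    (s := (Finset.Icc u v).filter (fun (j:ℕ) => ¬ cycleOutDeg σ (a + (j:ZMod n)) = 0))
    (p := fun j => cycleOutDeg σ (a + (j:ZMod n)) = 1)
  rw [Finset.filter_filter, Finset.filter_filter] at h2
  have e1 : (Finset.Icc u v).filter (fun (j:ℕ) => ¬ cycleOutDeg σ (a + (j:ZMod n)) = 0 ∧
      cycleOutDeg σ (a + (j:ZMod n)) = 1) =
      (Finset.Icc u v).filter (fun (j:ℕ) => cycleOutDeg σ (a + (j:ZMod n)) = 1) := by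
    apply Finset.filter_congr; intro j _
    constructor
    · exact fun h => h.2
    · exact fun h => ⟨by omega, h⟩
  have e2 : (Finset.Icc u v).filter (fun (j:ℕ) => ¬ cycleOutDeg σ (a + (j:ZMod n)) = 0 ∧
      ¬ cycleOutDeg σ (a + (j:ZMod n)) = 1) =
      (Finset.Icc u v).filter (fun (j:ℕ) => cycleOutDeg σ (a + (j:ZMod n)) = 2) := by
    apply Finset.filter_congr; intro j _
    have := deg_le_two σ (a + (j:ZMod n))
    constructor
    · intro h; omega
    · intro h; omega
  rw [e1, e2] at h2
  omega

lemma wc_split {n : ℕ} (σ : ZMod n → Bool) (a : ZMod n) (t u w v : ℕ)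
    (h1 : u ≤ w + 1) (h2 : w ≤ v) :
    wc σ a t u v = wc σ a t u w + wc σ a t (w+1) v := by
  classical
  rw [wc, wc, wc]
  have hdisj : Disjoint ((Finset.Icc u w).filter (fun (j:ℕ) => cycleOutDeg σ (a + (j:ZMod n)) = t))
      ((Finset.Icc (w+1) v).filter (fun (j:ℕ) => cycleOutDeg σ (a + (j:ZMod n)) = t)) := by
    apply Finset.disjoint_filter_filter
    rw [Finset.disjoint_left]
    intro x hx hx'
    simp only [Finset.mem_Icc] at hx hx'
    omega
  have hIcc : Finset.Icc u v = Finset.Icc u w ∪ Finset.Icc (w+1) v := by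
    ext x; simp only [Finset.mem_union, Finset.mem_Icc]; omega
  rw [hIcc, Finset.filter_union, Finset.card_union_of_disjoint hdisj]

lemma wc_alt {n : ℕ} (σ : ZMod n → Bool) (a : ZMod n) (u v : ℕ) (hu : 1 ≤ u) :
    wc σ a 0 u v ≤ wc σ a 2 u v + 1 ∧ wc σ a 2 u v ≤ wc σ a 0 u v + 1 := by
  classical
  set b : ℕ → Bool := fun j => σ (a + (j:ZMod n)) with hb
  have e0 : ((Finset.Icc u v).filter (fun (j:ℕ) => cycleOutDeg σ (a + (j:ZMod n)) = 0)) =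
      ((Finset.Icc u v).filter (fun j => b (j-1) = true ∧ b j = false)) := by
    apply Finset.filter_congr
    intro j hj
    rw [Finset.mem_Icc] at hj
    exact deg0_iff σ a j (le_trans hu hj.1)
  have e2 : ((Finset.Icc u v).filter (fun (j:ℕ) => cycleOutDeg σ (a + (j:ZMod n)) = 2)) =
      ((Finset.Icc u v).filter (fun j => b (j-1) = false ∧ b j = true)) := by
    apply Finset.filter_congr
    intro j hj
    rw [Finset.mem_Icc] at hj
    exact deg2_iff σ a j (le_trans hu hj.1)
  have h1 := (alt b u hu v).1
  have h2 := (alt (fun j => ! b j) u hu v).1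
  have e2' : ((Finset.Icc u v).filter (fun j => (!b (j-1)) = true ∧ (!b j) = false)) =
      ((Finset.Icc u v).filter (fun j => b (j-1) = false ∧ b j = true)) := by
    apply Finset.filter_congr
    intro j _
    simp
  have e0' : ((Finset.Icc u v).filter (fun j => (!b (j-1)) = false ∧ (!b j) = true)) =
      ((Finset.Icc u v).filter (fun j => b (j-1) = true ∧ b j = false)) := by
    apply Finset.filter_congr
    intro j _
    simp
  rw [e2', e0'] at h2
  rw [wc, wc, e0, e2]
  exact ⟨h1, h2⟩

lemma sep_deg0 {n : ℕ} (σ : ZMod n → Bool) (a : ZMod n) {u v : ℕ} (hu : 1 ≤ u)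
    {x y : ℕ} (hx : x ∈ (Finset.Icc u v).filter (fun (j:ℕ) => cycleOutDeg σ (a + (j:ZMod n)) = 0))
    (hy : y ∈ (Finset.Icc u v).filter (fun (j:ℕ) => cycleOutDeg σ (a + (j:ZMod n)) = 0))
    (hxy : x < y) : x + 2 ≤ y := by
  rw [Finset.mem_filter, Finset.mem_Icc] at hx hy
  by_contra hc
  have hyx : y = x + 1 := by omega
  have h1 := (deg0_iff σ a x (by omega)).mp hx.2
  have h2 := (deg0_iff σ a y (by omega)).mp hy.2
  rw [hyx] at h2
  simp only [Nat.add_sub_cancel] at h2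
  rw [h2.1] at h1
  simp at h1

lemma sep_deg2 {n : ℕ} (σ : ZMod n → Bool) (a : ZMod n) {u v : ℕ} (hu : 1 ≤ u)
    {x y : ℕ} (hx : x ∈ (Finset.Icc u v).filter (fun (j:ℕ) => cycleOutDeg σ (a + (j:ZMod n)) = 2))
    (hy : y ∈ (Finset.Icc u v).filter (fun (j:ℕ) => cycleOutDeg σ (a + (j:ZMod n)) = 2))
    (hxy : x < y) : x + 2 ≤ y := by
  rw [Finset.mem_filter, Finset.mem_Icc] at hx hy
  by_contra hc
  have hyx : y = x + 1 := by omega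
  have h1 := (deg2_iff σ a x (by omega)).mp hx.2
  have h2 := (deg2_iff σ a y (by omega)).mp hy.2
  rw [hyx] at h2
  simp only [Nat.add_sub_cancel] at h2
  rw [h2.1] at h1
  simp at h1

lemma wc_le_global {n : ℕ} [NeZero n] (σ : ZMod n → Bool) (a : ZMod n) (t u v : ℕ)
    (hv : v < n) :
    wc σ a t u v ≤ (Finset.univ.filter (fun i => cycleOutDeg σ i = t)).card := by
  classical
  rw [wc]
  have key := Finset.card_le_card_of_injOn
    (s := (Finset.Icc u v).filter (fun (j:ℕ) => cycleOutDeg σ (a + (j:ZMod n)) = t))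
    (t := Finset.univ.filter (fun i => cycleOutDeg σ i = t))
    (fun j => a + (j:ZMod n)) ?_ ?_
  · exact key
  · intro j hj
    rw [Finset.mem_coe, Finset.mem_filter] at hj
    simp [hj.2]
  · intro x hx y hy hxy
    simp only [Finset.coe_filter, Set.mem_setOf_eq, Finset.mem_Icc] at hx hy
    have h1 : (x:ZMod n) = (y:ZMod n) := by
      have := hxy
      simpa using congrArg (fun z => z - a) (by simpa [add_comm] using this)
    have hx' : ((x:ZMod n)).val = x := ZMod.val_cast_of_lt (by omega)
    have hy' : ((y:ZMod n)).val = y := ZMod.val_cast_of_lt (by omega)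
    rw [← hx', ← hy', h1]

lemma sum_wc {n : ℕ} [NeZero n] (σ : ZMod n → Bool) (t ℓ : ℕ) :
    ∑ a : ZMod n, wc σ a t 1 ℓ =
      ℓ * (Finset.univ.filter (fun i => cycleOutDeg σ i = t)).card := by
  classical
  conv_lhs => simp only [wc, Finset.card_filter]
  rw [Finset.sum_comm]
  have inner : ∀ j : ℕ, (∑ a : ZMod n, if cycleOutDeg σ (a + (j:ZMod n)) = t then 1 else 0) =
      (Finset.univ.filter (fun i => cycleOutDeg σ i = t)).card := by
    intro j
    rw [Finset.card_filter]
    exact Fintype.sum_bijective (fun a : ZMod n => a + (j:ZMod n))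
      (Equiv.addRight ((j:ℕ):ZMod n)).bijective _ _ (fun a => rfl)
  calc ∑ j ∈ Finset.Icc 1 ℓ, (∑ a : ZMod n, if cycleOutDeg σ (a + (j:ZMod n)) = t then 1 else 0)
      = ∑ j ∈ Finset.Icc 1 ℓ, (Finset.univ.filter (fun i => cycleOutDeg σ i = t)).card := by
        apply Finset.sum_congr rfl; intro j _; exact inner j
    _ = ℓ * (Finset.univ.filter (fun i => cycleOutDeg σ i = t)).card := by
        rw [Finset.sum_const, Nat.card_Icc, Nat.add_sub_cancel, smul_eq_mul]

lemma wc_step {n : ℕ} (σ : ZMod n → Bool) (a : ZMod n) (t ℓ : ℕ) (hℓ : 1 ≤ ℓ) :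
    wc σ (a + 1) t 1 ℓ ≤ wc σ a t 1 ℓ + 1 := by
  classical
  have e : wc σ (a+1) t 1 ℓ =
      ((Finset.Icc 1 ℓ).filter (fun (j:ℕ) => cycleOutDeg σ (a + ((j+1:ℕ):ZMod n)) = t)).card := by
    rw [wc]
    congr 1
    apply Finset.filter_congr
    intro j _
    have hcast : a + 1 + (j:ZMod n) = a + ((j+1:ℕ):ZMod n) := by push_cast; ring
    rw [hcast]
  rw [e]
  have hins : Finset.Icc 1 ℓ = insert ℓ (Finset.Icc 1 (ℓ-1)) := by
    ext x; simp only [Finset.mem_insert, Finset.mem_Icc]; omega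
  have h1 : ((Finset.Icc 1 ℓ).filter (fun (j:ℕ) => cycleOutDeg σ (a + ((j+1:ℕ):ZMod n)) = t)).card ≤
      ((Finset.Icc 1 (ℓ-1)).filter (fun (j:ℕ) => cycleOutDeg σ (a + ((j+1:ℕ):ZMod n)) = t)).card + 1 := by
    rw [hins, Finset.filter_insert]
    split_ifs
    · exact le_trans (Finset.card_insert_le _ _) (by omega)
    · omega
  have h2 : ((Finset.Icc 1 (ℓ-1)).filter (fun (j:ℕ) => cycleOutDeg σ (a + ((j+1:ℕ):ZMod n)) = t)).card ≤
      wc σ a t 1 ℓ := by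
    rw [wc]
    have key := Finset.card_le_card_of_injOn
      (s := (Finset.Icc 1 (ℓ-1)).filter (fun (j:ℕ) => cycleOutDeg σ (a + ((j+1:ℕ):ZMod n)) = t))
      (t := (Finset.Icc 1 ℓ).filter (fun (j:ℕ) => cycleOutDeg σ (a + (j:ZMod n)) = t))
      (fun j => j + 1) ?_ ?_
    · exact key
    · intro j hj
      rw [Finset.mem_coe, Finset.mem_filter, Finset.mem_Icc] at hj
      simp only [Finset.mem_coe, Finset.mem_filter, Finset.mem_Icc]
      exact ⟨⟨by omega, by omega⟩, hj.2⟩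
    · intro x _ y _ h
      have hxy : x + 1 = y + 1 := h
      omega
  omega

lemma ivt {n : ℕ} [NeZero n] (f : ZMod n → ℕ) (step : ∀ a, f (a+1) ≤ f a + 1)
    (A B : ℕ) (hAB : A ≤ B) (hx : ∃ x, A ≤ f x) (hy : ∃ y, f y ≤ B) :
    ∃ z, A ≤ f z ∧ f z ≤ B := by
  classical
  obtain ⟨y, hyB⟩ := hy
  by_cases hyA : A ≤ f y
  · exact ⟨y, hyA, hyB⟩
  push_neg at hyA
  obtain ⟨x, hxA⟩ := hx
  have hk : ∃ k : ℕ, A ≤ f (y + (k:ZMod n)) := by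
    refine ⟨(x - y).val, ?_⟩
    have h1 : (((x - y).val : ℕ) : ZMod n) = x - y := ZMod.natCast_rightInverse (x - y)
    rw [h1]
    simpa using hxA
  set k0 := Nat.find hk with hk0
  have h1 : A ≤ f (y + (k0:ZMod n)) := Nat.find_spec hk
  have hk0pos : 0 < k0 := by
    rcases Nat.eq_zero_or_pos k0 with h | h
    · exfalso
      rw [h] at h1
      simp only [Nat.cast_zero, add_zero] at h1
      omega
    · exact h
  obtain ⟨k', hk'⟩ : ∃ k', k0 = k' + 1 := ⟨k0 - 1, by omega⟩
  have h2 : ¬ A ≤ f (y + ((k':ℕ):ZMod n)) := Nat.find_min hk (by omega)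
  have h3 : f (y + (k0:ZMod n)) ≤ f (y + ((k':ℕ):ZMod n)) + 1 := by
    have hcast : y + ((k0:ℕ):ZMod n) = (y + ((k':ℕ):ZMod n)) + 1 := by
      rw [hk']; push_cast; ring
    rw [hcast]
    exact step _
  exact ⟨y + (k0:ZMod n), h1, by omega⟩

lemma card02 {n : ℕ} [NeZero n] (σ : ZMod n → Bool) :
    (Finset.univ.filter (fun i => cycleOutDeg σ i = 0)).card =
    (Finset.univ.filter (fun i => cycleOutDeg σ i = 2)).card := by
  classical
  have c0 : ∀ i : ZMod n, cycleOutDeg σ i = 0 ↔ (σ (i-1) = true ∧ σ i = false) := by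
    intro i; rw [cycleOutDeg]
    rcases h1 : σ i <;> rcases h2 : σ (i-1) <;> simp [h1, h2]
  have c2 : ∀ i : ZMod n, cycleOutDeg σ i = 2 ↔ (σ (i-1) = false ∧ σ i = true) := by
    intro i; rw [cycleOutDeg]
    rcases h1 : σ i <;> rcases h2 : σ (i-1) <;> simp [h1, h2]
  have hA : (Finset.univ.filter (fun i : ZMod n => σ (i-1) = true)).card =
      (Finset.univ.filter (fun i : ZMod n => σ i = true)).card := by
    apply Finset.card_bij' (fun (i : ZMod n) _ => i - 1) (fun (i : ZMod n) _ => i + 1)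
    · intro i hi
      rw [Finset.mem_filter] at hi ⊢
      exact ⟨Finset.mem_univ _, hi.2⟩
    · intro i hi
      rw [Finset.mem_filter] at hi ⊢
      refine ⟨Finset.mem_univ _, ?_⟩
      simpa using hi.2
    · intro i _; ring
    · intro i _; ring
  have s1 := Finset.card_filter_add_card_filter_not
    (s := Finset.univ.filter (fun i : ZMod n => σ (i-1) = true))
    (p := fun i => σ i = true)
  have s2 := Finset.card_filter_add_card_filter_not
    (s := Finset.univ.filter (fun i : ZMod n => σ i = true))
    (p := fun i => σ (i-1) = true)
  rw [Finset.filter_filter, Finset.filter_filter] at s1 s2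
  have e1 : (Finset.univ.filter (fun i : ZMod n => σ (i-1) = true ∧ σ i = true)) =
      (Finset.univ.filter (fun i : ZMod n => σ i = true ∧ σ (i-1) = true)) := by
    apply Finset.filter_congr; intro i _; exact and_comm
  have e2 : (Finset.univ.filter (fun i : ZMod n => σ (i-1) = true ∧ ¬ σ i = true)) =
      (Finset.univ.filter (fun i => cycleOutDeg σ i = 0)) := by
    apply Finset.filter_congr; intro i _
    rw [c0 i, Bool.not_eq_true]
  have e3 : (Finset.univ.filter (fun i : ZMod n => σ i = true ∧ ¬ σ (i-1) = true)) =
      (Finset.univ.filter (fun i => cycleOutDeg σ i = 2)) := by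
    apply Finset.filter_congr; intro i _
    rw [c2 i, Bool.not_eq_true, and_comm]
  rw [e1, e2] at s1
  rw [e3] at s2
  omega

lemma card_sum {n : ℕ} [NeZero n] (σ : ZMod n → Bool) :
    (Finset.univ.filter (fun i => cycleOutDeg σ i = 0)).card +
    (Finset.univ.filter (fun i => cycleOutDeg σ i = 1)).card +
    (Finset.univ.filter (fun i => cycleOutDeg σ i = 2)).card = n := by
  classical
  have h1 := Finset.card_filter_add_card_filter_not (s := (Finset.univ : Finset (ZMod n)))
    (p := fun i => cycleOutDeg σ i = 0)
  have h2 := Finset.card_filter_add_card_filter_not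
    (s := (Finset.univ : Finset (ZMod n)).filter (fun i => ¬ cycleOutDeg σ i = 0))
    (p := fun i => cycleOutDeg σ i = 1)
  rw [Finset.filter_filter, Finset.filter_filter] at h2
  have e1 : (Finset.univ.filter (fun i : ZMod n => ¬ cycleOutDeg σ i = 0 ∧ cycleOutDeg σ i = 1)) =
      (Finset.univ.filter (fun i => cycleOutDeg σ i = 1)) := by
    apply Finset.filter_congr; intro i _
    constructor
    · exact fun h => h.2
    · exact fun h => ⟨by omega, h⟩
  have e2 : (Finset.univ.filter (fun i : ZMod n => ¬ cycleOutDeg σ i = 0 ∧ ¬ cycleOutDeg σ i = 1)) =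
      (Finset.univ.filter (fun i => cycleOutDeg σ i = 2)) := by
    apply Finset.filter_congr; intro i _
    have := deg_le_two σ i
    constructor
    · intro h; omega
    · intro h; omega
  rw [e1, e2] at h2
  have hcard : (Finset.univ : Finset (ZMod n)).card = n := by
    rw [Finset.card_univ, ZMod.card]
  omega

lemma extractX {n : ℕ} (σ : ZMod n → Bool) (a : ZMod n) (u v d μ₀ μ₂ : ℕ)
    (hu : 1 ≤ u) (hd : 1 ≤ d)
    (hc0 : (d+2) * (μ₀ + μ₂ + 2) ≤ wc σ a 0 u v) :
    ∃ Z₀ Z₂ : Finset ℕ,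
      Z₀ ⊆ Finset.Icc u v ∧ Z₂ ⊆ Finset.Icc u v ∧
      Z₀.card = μ₀ ∧ Z₂.card = μ₂ ∧
      (∀ j ∈ Z₀, cycleOutDeg σ (a + (j:ZMod n)) = 0) ∧
      (∀ j ∈ Z₂, cycleOutDeg σ (a + (j:ZMod n)) = 2) ∧
      (∀ x ∈ Z₀ ∪ Z₂, ∀ y ∈ Z₀ ∪ Z₂, x < y → x + d ≤ y) := by
  classical
  set S0 := (Finset.Icc u v).filter (fun (j:ℕ) => cycleOutDeg σ (a + (j:ZMod n)) = 0) with hS0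
  have hS0sep : ∀ x ∈ S0, ∀ y ∈ S0, x < y → x + 2 ≤ y :=
    fun x hx y hy h => sep_deg0 σ a hu hx hy h
  have hS0card : S0.card = wc σ a 0 u v := rfl
  have hμ0 : d * μ₀ < S0.card + d := by
    have key : d * μ₀ + 1 ≤ (d+2) * (μ₀ + μ₂ + 2) := by nlinarith
    omega
  obtain ⟨Z₀, hZ₀S, hZ₀c, hZ₀sep⟩ := sel d 2 (by norm_num) hd μ₀ S0 hS0sep hμ0
  set S2 := (Finset.Icc u v).filter (fun (j:ℕ) => cycleOutDeg σ (a + (j:ZMod n)) = 2) with hS2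
  have hS2sep : ∀ x ∈ S2, ∀ y ∈ S2, x < y → x + 2 ≤ y :=
    fun x hx y hy h => sep_deg2 σ a hu hx hy h
  have halt : S0.card ≤ S2.card + 1 := (wc_alt σ a u v hu).1
  set P : ℕ → Prop := fun x => ∀ p ∈ Z₀, x + d < p ∨ p + d < x with hP
  set S2' := S2.filter P with hS2'
  have hS2'sep : ∀ x ∈ S2', ∀ y ∈ S2', x < y → x + 2 ≤ y :=
    fun x hx y hy h => hS2sep x (Finset.filter_subset _ _ hx) y (Finset.filter_subset _ _ hy) h
  have hkill : (S2.filter (fun x => ¬ P x)).card ≤ μ₀ * (d + 1) := by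
    have hsubB : S2.filter (fun x => ¬ P x) ⊆
        Z₀.biUnion (fun p => S2.filter (fun x => p ≤ x + d ∧ x ≤ p + d)) := by
      intro x hx
      rw [Finset.mem_filter] at hx
      simp only [hP] at hx
      push_neg at hx
      obtain ⟨p, hp, hc1, hc2⟩ := hx.2
      rw [Finset.mem_biUnion]
      exact ⟨p, hp, Finset.mem_filter.mpr ⟨hx.1, by omega⟩⟩
    calc (S2.filter (fun x => ¬ P x)).card
        ≤ (Z₀.biUnion (fun p => S2.filter (fun x => p ≤ x + d ∧ x ≤ p + d))).card :=
          Finset.card_le_card hsubB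
      _ ≤ ∑ p ∈ Z₀, (S2.filter (fun x => p ≤ x + d ∧ x ≤ p + d)).card :=
          Finset.card_biUnion_le
      _ ≤ ∑ _p ∈ Z₀, (d + 1) := by
          apply Finset.sum_le_sum
          intro p _
          have := sep_card_le (S2.filter (fun x => p ≤ x + d ∧ x ≤ p + d)) 2 (p - d) (2*d+1)
            (by norm_num)
            (fun x hx y hy h => hS2sep x (Finset.filter_subset _ _ hx) y (Finset.filter_subset _ _ hy) h)
            (by
              intro x hx
              rw [Finset.mem_filter] at hx
              omega)
          have hdiv : (2*d+1-1)/2 = d := by omega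
          omega
      _ = μ₀ * (d+1) := by
          rw [Finset.sum_const, hZ₀c, smul_eq_mul]
  have hμ2 : d * μ₂ < S2'.card + d := by
    have hsplit := Finset.card_filter_add_card_filter_not (s := S2) (p := P)
    have key : μ₀ * (d+1) + d * μ₂ + 2 ≤ (d+2) * (μ₀ + μ₂ + 2) := by nlinarith
    have hm : S2'.card = (S2.filter P).card := rfl
    have hc0' : (d+2) * (μ₀ + μ₂ + 2) ≤ S0.card := hc0
    omega
  obtain ⟨Z₂, hZ₂S, hZ₂c, hZ₂sep⟩ := sel d 2 (by norm_num) hd μ₂ S2' hS2'sep hμ2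
  refine ⟨Z₀, Z₂, ?_, ?_, hZ₀c, hZ₂c, ?_, ?_, ?_⟩
  · exact hZ₀S.trans (Finset.filter_subset _ _)
  · exact hZ₂S.trans ((Finset.filter_subset _ _).trans (Finset.filter_subset _ _))
  · intro j hj
    have := hZ₀S hj
    rw [hS0, Finset.mem_filter] at this
    exact this.2
  · intro j hj
    have := hZ₂S hj
    rw [hS2', Finset.mem_filter, hS2, Finset.mem_filter] at this
    exact this.1.2
  · intro x hx y hy hxy
    rcases Finset.mem_union.mp hx with hx0 | hx2 <;>
      rcases Finset.mem_union.mp hy with hy0 | hy2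
    · have := hZ₀sep x hx0 y hy0 hxy; omega
    · have := hZ₂S hy2
      rw [hS2', Finset.mem_filter] at this
      have := this.2 x hx0
      omega
    · have := hZ₂S hx2
      rw [hS2', Finset.mem_filter] at this
      have := this.2 y hy0
      omega
    · have := hZ₂sep x hx2 y hy2 hxy; omega

lemma glue {n : ℕ} (σ : ZMod n → Bool) (a : ZMod n) (d ℓ μ₀ μ₁ μ₂ : ℕ)
    (Z₀ Z₁ Z₂ : Finset ℕ)
    (hsub : ∀ j ∈ Z₀ ∪ Z₁ ∪ Z₂, j ≤ ℓ)
    (hsep : ∀ x ∈ Z₀ ∪ Z₁ ∪ Z₂, ∀ y ∈ Z₀ ∪ Z₁ ∪ Z₂, x < y → x + d ≤ y)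
    (hd : 100 * Real.log n / Real.log (Real.log n) ≤ (d:ℝ))
    (hℓ : (ℓ:ℝ) ≤ (n:ℝ)/100)
    (hc0 : Z₀.card = μ₀) (hc1 : Z₁.card = μ₁) (hc2 : Z₂.card = μ₂)
    (hdeg0 : ∀ j ∈ Z₀, cycleOutDeg σ (a + (j:ZMod n)) = 0)
    (hdeg1 : ∀ j ∈ Z₁, cycleOutDeg σ (a + (j:ZMod n)) = 1)
    (hdeg2 : ∀ j ∈ Z₂, cycleOutDeg σ (a + (j:ZMod n)) = 2) :
    ∃ (a : ZMod n) (L : ℕ), (L : ℝ) ≤ (n : ℝ) / 100 ∧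
        ∃ Z₀ Z₁ Z₂ : Finset ℕ,
          (∀ j ∈ Z₀ ∪ Z₁ ∪ Z₂, j ≤ L) ∧
          (∀ j ∈ Z₀ ∪ Z₁ ∪ Z₂, ∀ j' ∈ Z₀ ∪ Z₁ ∪ Z₂, j ≠ j' →
            100 * Real.log n / Real.log (Real.log n) ≤ |(j : ℝ) - (j' : ℝ)|) ∧
          Z₀.card = μ₀ ∧ Z₁.card = μ₁ ∧ Z₂.card = μ₂ ∧
          (∀ j ∈ Z₀, cycleOutDeg σ (a + j) = 0) ∧
          (∀ j ∈ Z₁, cycleOutDeg σ (a + j) = 1) ∧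
          (∀ j ∈ Z₂, cycleOutDeg σ (a + j) = 2) := by
  refine ⟨a, ℓ, hℓ, Z₀, Z₁, Z₂, hsub, ?_, hc0, hc1, hc2, hdeg0, hdeg1, hdeg2⟩
  intro j hj j' hj' hne
  rcases Nat.lt_or_ge j j' with h | h
  · have hs := hsep j hj j' hj' h
    have hcast : (j:ℝ) + d ≤ (j':ℝ) := by exact_mod_cast hs
    have habs : |(j:ℝ) - (j':ℝ)| = (j':ℝ) - j := by
      rw [abs_sub_comm, abs_of_nonneg]
      linarith
    rw [habs]
    linarith
  · have h' : j' < j := by omega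
    have hs := hsep j' hj' j hj h'
    have hcast : (j':ℝ) + d ≤ (j:ℝ) := by exact_mod_cast hs
    have habs : |(j:ℝ) - (j':ℝ)| = (j:ℝ) - j' := by
      rw [abs_of_nonneg]
      linarith
    rw [habs]
    linarith
set_option maxHeartbeats 2000000 in
/-- For large `n`: if `C` is an oriented `n`-cycle with exactly `λ`
vertices of out-degree 0, `μ₀ + μ₂ = ⌈2λ/log n⌉` and `μ₁ = ⌈(n−2λ)/log n⌉`, then there is
a subpath `P ⊆ C` of length at most `n/100` (given by a starting vertex `a` and a length
`L`, with vertices `a, a+1, …, a+L`) and sets `Z₀, Z₁, Z₂` of positions on `P`, pairwise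
at distance at least `100 log n/loglog n` along `P`, with `|Z_i| = μ_i` and every vertex
of `Z_i` of out-degree `i` in `C`. -/
theorem stmt8 :
    ∃ n₀ : ℕ, ∀ n : ℕ, n₀ ≤ n → ∀ (lam μ₀ μ₂ : ℕ) (σ : ZMod n → Bool),
      {i : ZMod n | cycleOutDeg σ i = 0}.ncard = lam →
      μ₀ + μ₂ = ⌈(2 * lam : ℝ) / Real.log n⌉₊ →
      ∀ μ₁ : ℕ, μ₁ = ⌈((n : ℝ) - 2 * lam) / Real.log n⌉₊ →
      ∃ (a : ZMod n) (L : ℕ), (L : ℝ) ≤ (n : ℝ) / 100 ∧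
        ∃ Z₀ Z₁ Z₂ : Finset ℕ,
          (∀ j ∈ Z₀ ∪ Z₁ ∪ Z₂, j ≤ L) ∧
          (∀ j ∈ Z₀ ∪ Z₁ ∪ Z₂, ∀ j' ∈ Z₀ ∪ Z₁ ∪ Z₂, j ≠ j' →
            100 * Real.log n / Real.log (Real.log n) ≤ |(j : ℝ) - (j' : ℝ)|) ∧
          Z₀.card = μ₀ ∧ Z₁.card = μ₁ ∧ Z₂.card = μ₂ ∧
          (∀ j ∈ Z₀, cycleOutDeg σ (a + j) = 0) ∧
          (∀ j ∈ Z₁, cycleOutDeg σ (a + j) = 1) ∧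
          (∀ j ∈ Z₂, cycleOutDeg σ (a + j) = 2) := by
  classical
  refine ⟨⌈Real.exp (Real.exp (10^9 : ℝ))⌉₊ + 3, ?_⟩
  intro n hn lam μ₀ μ₂ σ hlam hs μ₁ hμ₁
  have hn3 : 3 ≤ n := le_trans (by omega) hn
  haveI : NeZero n := ⟨by omega⟩
  set L : ℝ := Real.log n with hLdef
  -- basic real facts
  have hnR : Real.exp (Real.exp (10^9:ℝ)) ≤ (n:ℝ) := by
    calc Real.exp (Real.exp (10^9:ℝ)) ≤ (⌈Real.exp (Real.exp (10^9:ℝ))⌉₊ : ℝ) := Nat.le_ceil _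
    _ ≤ ((⌈Real.exp (Real.exp (10^9:ℝ))⌉₊ + 3 : ℕ) : ℝ) := by push_cast; linarith
    _ ≤ (n:ℝ) := Nat.cast_le.mpr hn
  have hexp9 : (10^9:ℝ) + 1 ≤ Real.exp (10^9:ℝ) := Real.add_one_le_exp _
  have hL1 : Real.exp (10^9:ℝ) ≤ L := by
    rw [hLdef]
    calc Real.exp (10^9:ℝ) = Real.log (Real.exp (Real.exp (10^9:ℝ))) := (Real.log_exp _).symm
    _ ≤ Real.log n := Real.log_le_log (Real.exp_pos _) hnR
  have hLbig : (10^9:ℝ) ≤ L := by linarith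
  have hLpos : (0:ℝ) < L := by linarith
  have hlogL : (10^9:ℝ) ≤ Real.log L := by
    calc (10^9:ℝ) = Real.log (Real.exp (10^9:ℝ)) := (Real.log_exp _).symm
    _ ≤ Real.log L := Real.log_le_log (Real.exp_pos _) hL1
  have hlogLpos : (0:ℝ) < Real.log L := by linarith
  have hnbigR : (10^9:ℝ) ≤ (n:ℝ) := by
    have h1 : Real.exp (10^9:ℝ) ≤ Real.exp (Real.exp (10^9:ℝ)) :=
      Real.exp_le_exp.mpr (by linarith)
    linarith
  have hn0R : (0:ℝ) < (n:ℝ) := by exact_mod_cast (by omega : 0 < n)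
  have hn6 : 1000000 ≤ n := by
    have : (1000000:ℝ) ≤ (n:ℝ) := by norm_num at hnbigR ⊢; linarith
    exact_mod_cast this
  have hLn : L ≤ 2e-6 * n := by
    have hpos : (0:ℝ) < (n:ℝ)/1000000 := by positivity
    have h1 : Real.log ((n:ℝ)/1000000) ≤ (n:ℝ)/1000000 - 1 := Real.log_le_sub_one_of_pos hpos
    have h2 : Real.log ((n:ℝ)/1000000) = Real.log n - Real.log 1000000 :=
      Real.log_div (by positivity) (by norm_num)
    have h3 : Real.log (1000000:ℝ) ≤ 999999 := by
      have := Real.log_le_sub_one_of_pos (show (0:ℝ) < 1000000 by norm_num)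
      linarith
    have h4 : L ≤ (n:ℝ)/1000000 + 1000000 := by rw [hLdef]; linarith
    have h5 : (1000000:ℝ) ≤ 1e-3 * L := by norm_num at hLbig ⊢; linarith
    linarith
  -- d
  set d : ℕ := ⌈100 * L / Real.log L⌉₊ with hd_def
  have hd_low : 100 * L / Real.log L ≤ (d:ℝ) := Nat.le_ceil _
  have hd_pos : 1 ≤ d := by
    rw [hd_def]
    exact Nat.one_le_iff_ne_zero.mpr (by
      intro h
      have := Nat.ceil_eq_zero.mp h
      have : (0:ℝ) < 100 * L / Real.log L := by positivity
      linarith)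
  have hd_hi : (d:ℝ) ≤ 2e-6 * L := by
    have h1 : ((⌈100 * L / Real.log L⌉₊:ℕ):ℝ) < 100 * L / Real.log L + 1 :=
      Nat.ceil_lt_add_one (by positivity)
    have h2 : 100 * L / Real.log L ≤ 100 * L / 10^9 :=
      div_le_div_of_nonneg_left (by positivity) (by norm_num) hlogL
    rw [← hd_def] at h1
    have h3 : (1:ℝ) ≤ 1e-9 * L := by linarith
    have h4 : 100 * L / 10^9 = 1e-7 * L := by ring
    linarith
  -- global counts
  have hlam_eq : (Finset.univ.filter (fun i => cycleOutDeg σ i = 0)).card = lam := by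
    rw [← hlam, Set.ncard_eq_toFinset_card', Set.toFinset_setOf]
  have ha02 := card02 σ
  have hasum := card_sum σ
  have h2lam : 2 * lam ≤ n := by omega
  set m : ℕ := n - 2*lam with hmdef
  have ha1 : (Finset.univ.filter (fun i => cycleOutDeg σ i = 1)).card = m := by omega
  have hmR : (m:ℝ) = (n:ℝ) - 2*lam := by
    rw [hmdef]; push_cast [h2lam]; ring
  have hmn : (m:ℝ) ≤ (n:ℝ) := by
    have : (0:ℝ) ≤ 2*(lam:ℝ) := by positivity
    linarith
  -- μ bounds
  have hsR_hi : ((μ₀ + μ₂ : ℕ):ℝ) ≤ 2*lam/L + 1 := by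
    rw [hs]
    have hcl : ((⌈(2 * lam : ℝ) / L⌉₊:ℕ):ℝ) < (2 * lam : ℝ) / L + 1 :=
      Nat.ceil_lt_add_one (by positivity)
    push_cast
    push_cast at hcl
    linarith
  have hsR_lo : 2*(lam:ℝ)/L ≤ ((μ₀ + μ₂ : ℕ):ℝ) := by
    rw [hs, hLdef]
    have := Nat.le_ceil ((2 * lam : ℝ) / Real.log n)
    push_cast at this ⊢
    linarith
  have hμ₁R_hi : (μ₁:ℝ) ≤ (m:ℝ)/L + 1 := by
    rw [hμ₁]
    have h0 : (0:ℝ) ≤ ((n:ℝ) - 2*lam) / L := by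
      apply div_nonneg _ (le_of_lt hLpos)
      rw [← hmR]; positivity
    have hcl : ((⌈((n:ℝ) - 2*lam) / L⌉₊:ℕ):ℝ) < ((n:ℝ) - 2*lam) / L + 1 :=
      Nat.ceil_lt_add_one h0
    rw [hmR]
    linarith
  -- ℓ and h
  set ℓ : ℕ := n / 200 with hℓdef
  have hℓ_hi : (ℓ:ℝ) ≤ (n:ℝ)/200 := Nat.cast_div_le
  have hℓℕ : n ≤ 200 * ℓ + 199 := by omega
  have hℓ1 : 1 ≤ ℓ := by omega
  have hℓn : ℓ < n := by omega
  have hnℓ : (n:ℝ) ≤ 201 * ℓ := by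
    have h199 : 199 ≤ ℓ := by omega
    have : (n:ℝ) ≤ 200 * ℓ + 199 := by exact_mod_cast hℓℕ
    have : (199:ℝ) ≤ (ℓ:ℝ) := by exact_mod_cast h199
    linarith
  have hℓR_lo : (n:ℝ)/201 ≤ (ℓ:ℝ) := by linarith
  set h : ℕ := ℓ / 2 with hhdef
  have hh2 : 2*h ≤ ℓ ∧ ℓ ≤ 2*h + 1 := by omega
  have hhR_lo : ((ℓ:ℝ) - 1)/2 ≤ (h:ℝ) := by
    have : (ℓ:ℝ) ≤ 2*h + 1 := by exact_mod_cast hh2.2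
    linarith
  have hhR_hi : (h:ℝ) ≤ (ℓ:ℝ)/2 := by
    have : (2*h:ℕ) ≤ ℓ := hh2.1
    have : ((2*h:ℕ):ℝ) ≤ (ℓ:ℝ) := by exact_mod_cast this
    push_cast at this
    linarith
  -- parameters
  set T0 : ℕ := (d+2) * (μ₀ + μ₂ + 2) with hT0def
  set T1 : ℕ := d * μ₁ with hT1def
  set Alo : ℕ := 2*T0 + 2*d + 4 with hAlodef
  have hT0R : (T0:ℝ) ≤ 7e-6 * lam + 1e-5 * L := by
    have e1 : (d:ℝ)+2 ≤ 3e-6 * L := by linarith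
    have e2 : ((μ₀+μ₂:ℕ):ℝ)+2 ≤ 2*lam/L + 3 := by push_cast; push_cast at hsR_hi; linarith
    have e3 : (T0:ℝ) = ((d:ℝ)+2)*(((μ₀+μ₂:ℕ):ℝ)+2) := by rw [hT0def]; push_cast; ring
    have e4 : ((d:ℝ)+2)*(((μ₀+μ₂:ℕ):ℝ)+2) ≤ (3e-6*L)*(2*lam/L + 3) := by
      apply mul_le_mul e1 e2 (by positivity) (by positivity)
    have e5 : (3e-6*L)*(2*lam/L + 3) = 6e-6*lam + 9e-6*L := by
      field_simp
      ring
    have hlamnn : (0:ℝ) ≤ lam := by positivity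
    linarith
  have hT1R : (T1:ℝ) ≤ 2e-6 * m + 3e-6 * L := by
    have e3 : (T1:ℝ) = (d:ℝ) * μ₁ := by rw [hT1def]; push_cast; ring
    have e4 : (d:ℝ) * μ₁ ≤ (2e-6*L) * ((m:ℝ)/L + 1) := by
      apply mul_le_mul hd_hi hμ₁R_hi (by positivity) (by positivity)
    have e5 : (2e-6*L) * ((m:ℝ)/L + 1) = 2e-6*m + 2e-6*L := by
      field_simp
    have : (0:ℝ) ≤ L := le_of_lt hLpos
    linarith
  have hAloR : (Alo:ℝ) ≤ 1.4e-5 * lam + 3e-5 * L := by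
    have e3 : (Alo:ℝ) = 2*(T0:ℝ) + 2*d + 4 := by rw [hAlodef]; push_cast; ring
    have h4 : (4:ℝ) ≤ 1e-6 * L := by linarith
    linarith
  -- Y-type selection helper
  have hselY : ∀ (a : ZMod n) (u2 : ℕ), 1 ≤ u2 → u2 ≤ d + 2 →
      2*(lam:ℝ) ≤ L →
      ∃ Z₁ : Finset ℕ, Z₁ ⊆ Finset.Icc u2 ℓ ∧ Z₁.card = μ₁ ∧
        (∀ j ∈ Z₁, cycleOutDeg σ (a + (j:ZMod n)) = 1) ∧
        (∀ x ∈ Z₁, ∀ y ∈ Z₁, x < y → x + d ≤ y) := by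
    intro a u2 hu2 hu2d hlamL
    set S1 := (Finset.Icc u2 ℓ).filter (fun (j:ℕ) => cycleOutDeg σ (a + (j:ZMod n)) = 1) with hS1
    have hpart := wc_partition σ a u2 ℓ
    have halt2 := (wc_alt σ a u2 ℓ hu2).2
    have hglob := wc_le_global σ a 0 u2 ℓ hℓn
    rw [hlam_eq] at hglob
    have hcard : (Finset.Icc u2 ℓ).card = ℓ + 1 - u2 := by rw [Nat.card_Icc]
    have hℕ : ℓ ≤ wc σ a 1 u2 ℓ + 2*lam + u2 := by omega
    have hc1R : (ℓ:ℝ) - ((d:ℝ)+2) - 2*lam ≤ ((wc σ a 1 u2 ℓ:ℕ):ℝ) := by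
      have h1 := (Nat.cast_le (α := ℝ)).mpr hℕ
      push_cast at h1
      have hu2R : (u2:ℝ) ≤ (d:ℝ)+2 := by exact_mod_cast hu2d
      linarith
    have e1 : ((d*μ₁:ℕ):ℝ) ≤ 2e-6*m + 3e-6*L := hT1def ▸ hT1R
    have hdμ₁ : ((d*μ₁:ℕ):ℝ) < (ℓ:ℝ) - ((d:ℝ)+2) - 2*lam := by
      push_cast at e1 ⊢
      have : (2:ℝ) ≤ 1e-9 * n := by linarith
      linarith
    have hμ₁ℕ : d*μ₁ < wc σ a 1 u2 ℓ + d := by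
      have hlt : ((d*μ₁:ℕ):ℝ) < ((wc σ a 1 u2 ℓ:ℕ):ℝ) := by linarith
      have := Nat.cast_lt.mp hlt
      omega
    obtain ⟨Z₁, hZ₁S, hZ₁c, hZ₁sep⟩ := sel d 1 (le_refl 1) hd_pos μ₁ S1
      (fun x _ y _ hxy => by omega) hμ₁ℕ
    refine ⟨Z₁, hZ₁S.trans (Finset.filter_subset _ _), hZ₁c, ?_, ?_⟩
    · intro j hj
      have := hZ₁S hj
      rw [hS1, Finset.mem_filter] at this
      exact this.2
    · intro x hx y hy hxy
      have := hZ₁sep x hx y hy hxy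
      omega
  have hglue_ℓ : (ℓ:ℝ) ≤ (n:ℝ)/100 := by linarith
  rcases le_or_gt L (2*(lam:ℝ)) with hbig | hsmall
  · -- BIG CASE : L ≤ 2λ
    have hlam1 : 1 ≤ lam := by
      have : (1:ℝ) ≤ (lam:ℝ) := by linarith
      exact_mod_cast this
    have hlamn2 : 2*(lam:ℝ) ≤ (n:ℝ) := by
      have := (Nat.cast_le (α := ℝ)).mpr h2lam
      push_cast at this
      linarith
    set f : ZMod n → ℕ := fun a => wc σ a 0 1 ℓ with hfdef
    have hstep : ∀ a, f (a+1) ≤ f a + 1 := fun a => wc_step σ a 0 ℓ hℓ1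
    have hcardu : (Finset.univ : Finset (ZMod n)).card = n := by
      rw [Finset.card_univ, ZMod.card]
    have hsum0 : ∑ a : ZMod n, f a = ℓ * lam := by
      simp only [hfdef]
      rw [sum_wc σ 0 ℓ, hlam_eq]
    have hE1 : ∃ x, Alo ≤ f x := by
      by_contra hcon
      push_neg at hcon
      have hA1 : 1 ≤ Alo := by omega
      have hub : ∀ x ∈ Finset.univ, f x ≤ Alo - 1 := fun x _ => by have := hcon x; omega
      have hsle := Finset.sum_le_card_nsmul Finset.univ f (Alo-1) hub
      rw [hsum0, hcardu, smul_eq_mul] at hsle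
      have hR : ((ℓ*lam:ℕ):ℝ) ≤ ((n*(Alo-1):ℕ):ℝ) := Nat.cast_le.mpr hsle
      rw [Nat.cast_mul, Nat.cast_mul, Nat.cast_sub hA1] at hR
      push_cast at hR
      have hAloR2 : (Alo:ℝ) ≤ 1e-4 * lam := by linarith
      have hlp : (1:ℝ) ≤ (ℓ:ℝ)*lam := by
        have e1 : (1:ℝ) ≤ (ℓ:ℝ) := by exact_mod_cast hℓ1
        have e2 : (1:ℝ) ≤ (lam:ℝ) := by exact_mod_cast hlam1
        nlinarith
      have hstep2 : (n:ℝ) * ((Alo:ℝ)-1) ≤ (201*(ℓ:ℝ)) * (1e-4*lam) := by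
        have hnn : (0:ℝ) ≤ (Alo:ℝ) - 1 := by
          have : (1:ℝ) ≤ (Alo:ℝ) := by exact_mod_cast hA1
          linarith
        apply mul_le_mul hnℓ (by linarith) hnn (by positivity)
      have hfinal : ((ℓ:ℝ)*(lam:ℝ)) ≤ 0.0201*((ℓ:ℝ)*(lam:ℝ)) := by
        calc ((ℓ:ℝ)*(lam:ℝ)) ≤ (n:ℝ) * ((Alo:ℝ) - 1) := by rw [hAlodef]; push_cast; linarith [hR]
        _ ≤ (201*(ℓ:ℝ)) * (1e-4*(lam:ℝ)) := hstep2
        _ = 0.0201*((ℓ:ℝ)*(lam:ℝ)) := by ring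
      nlinarith [hfinal, hlp]
    have hT1n : (T1:ℝ) ≤ 5e-6 * n := by linarith
    have hBh : d + T1 + 2 ≤ h := by
      have hc : ((d + T1 + 2:ℕ):ℝ) ≤ (h:ℝ) := by
        push_cast
        linarith
      exact_mod_cast hc
    set Bhi := h - (d + T1 + 2) with hBhidef
    have hBhiR : (Bhi:ℝ) = (h:ℝ) - ((d:ℝ) + (T1:ℝ) + 2) := by
      rw [hBhidef, Nat.cast_sub hBh]
      push_cast
      ring
    have h1h : 1 ≤ h := by omega
    by_cases hE2 : ∃ y, f y ≤ Bhi
    · -- MAIN SUBCASE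
      have hAB : Alo ≤ Bhi := by
        have hc : ((Alo:ℕ):ℝ) ≤ ((Bhi:ℕ):ℝ) := by
          rw [hBhiR]
          linarith
        exact_mod_cast hc
      obtain ⟨z, hz1, hz2⟩ := ivt f hstep Alo Bhi hAB hE1 hE2
      have hdh : h + d + 1 ≤ ℓ := by
        have hc : ((h + d + 1:ℕ):ℝ) ≤ (ℓ:ℝ) := by
          push_cast
          linarith
        exact_mod_cast hc
      have hsplit1 : f z = wc σ z 0 1 h + wc σ z 0 (h+1) ℓ :=
        wc_split σ z 0 1 h ℓ (by omega) (by omega)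
      have hsplit2 : wc σ z 0 (h+1) ℓ = wc σ z 0 (h+1) (h+d) + wc σ z 0 (h+d+1) ℓ :=
        wc_split σ z 0 (h+1) (h+d) ℓ (by omega) (by omega)
      have hgap : wc σ z 0 (h+1) (h+d) ≤ d := by
        calc wc σ z 0 (h+1) (h+d) ≤ (Finset.Icc (h+1) (h+d)).card := Finset.card_filter_le _ _
        _ = d := by rw [Nat.card_Icc]; omega
      by_cases hside : wc σ z 0 (h+d+1) ℓ ≤ wc σ z 0 1 h
      · -- X = [1,h], Y = [h+d+1,ℓ]
        have hc0X : (d+2) * (μ₀ + μ₂ + 2) ≤ wc σ z 0 1 h := by omega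
        obtain ⟨Z₀, Z₂, hZ₀S, hZ₂S, hZ₀c, hZ₂c, hZ₀deg, hZ₂deg, hXsep⟩ :=
          extractX σ z 1 h d μ₀ μ₂ (le_refl 1) hd_pos hc0X
        have hpartY := wc_partition σ z (h+d+1) ℓ
        have haltY := (wc_alt σ z (h+d+1) ℓ (by omega)).2
        have hcardY : (Finset.Icc (h+d+1) ℓ).card = ℓ + 1 - (h+d+1) := Nat.card_Icc _ _
        have hc1Y : d * μ₁ < wc σ z 1 (h+d+1) ℓ + d := by omega
        obtain ⟨Z₁, hZ₁S, hZ₁c, hZ₁sep⟩ := sel d 1 (le_refl 1) hd_pos μ₁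
          ((Finset.Icc (h+d+1) ℓ).filter (fun (j:ℕ) => cycleOutDeg σ (z + (j:ZMod n)) = 1))
          (fun x _ y _ hxy => by omega) hc1Y
        have hZ₁Icc : ∀ j ∈ Z₁, h+d+1 ≤ j ∧ j ≤ ℓ := by
          intro j hj
          have := hZ₁S hj
          rw [Finset.mem_filter, Finset.mem_Icc] at this
          exact this.1
        have hZ₁deg : ∀ j ∈ Z₁, cycleOutDeg σ (z + (j:ZMod n)) = 1 := by
          intro j hj
          have := hZ₁S hj
          rw [Finset.mem_filter] at this
          exact this.2
        apply glue σ z d ℓ μ₀ μ₁ μ₂ Z₀ Z₁ Z₂ ?_ ?_ hd_low hglue_ℓ hZ₀c hZ₁c hZ₂c hZ₀deg hZ₁deg hZ₂deg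
        · intro j hj
          rcases Finset.mem_union.mp hj with hj' | hj'
          · rcases Finset.mem_union.mp hj' with hj'' | hj''
            · have := hZ₀S hj''; rw [Finset.mem_Icc] at this; omega
            · exact (hZ₁Icc j hj'').2
          · have := hZ₂S hj'; rw [Finset.mem_Icc] at this; omega
        · intro x hx y hy hxy
          have hmem : ∀ w, w ∈ Z₀ ∪ Z₁ ∪ Z₂ → (w ∈ Z₀ ∪ Z₂ ∧ w ≤ h) ∨ (w ∈ Z₁ ∧ h+d+1 ≤ w) := by
            intro w hw
            rcases Finset.mem_union.mp hw with hw' | hw'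
            · rcases Finset.mem_union.mp hw' with hw'' | hw''
              · have := hZ₀S hw''; rw [Finset.mem_Icc] at this
                exact Or.inl ⟨Finset.mem_union_left _ hw'', this.2⟩
              · exact Or.inr ⟨hw'', (hZ₁Icc w hw'').1⟩
            · have := hZ₂S hw'; rw [Finset.mem_Icc] at this
              exact Or.inl ⟨Finset.mem_union_right _ hw', this.2⟩
          rcases hmem x hx with ⟨hx1, hx2⟩ | ⟨hx1, hx2⟩ <;>
            rcases hmem y hy with ⟨hy1, hy2⟩ | ⟨hy1, hy2⟩
          · exact hXsep x hx1 y hy1 hxy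
          · omega
          · omega
          · have := hZ₁sep x hx1 y hy1 hxy; omega
      · -- X = [h+d+1,ℓ], Y = [1,h]
        push_neg at hside
        have hc0X : (d+2) * (μ₀ + μ₂ + 2) ≤ wc σ z 0 (h+d+1) ℓ := by omega
        obtain ⟨Z₀, Z₂, hZ₀S, hZ₂S, hZ₀c, hZ₂c, hZ₀deg, hZ₂deg, hXsep⟩ :=
          extractX σ z (h+d+1) ℓ d μ₀ μ₂ (by omega) hd_pos hc0X
        have hpartY := wc_partition σ z 1 h
        have haltY := (wc_alt σ z 1 h (le_refl 1)).2
        have hcardY : (Finset.Icc 1 h).card = h + 1 - 1 := Nat.card_Icc _ _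
        have hc1Y : d * μ₁ < wc σ z 1 1 h + d := by omega
        obtain ⟨Z₁, hZ₁S, hZ₁c, hZ₁sep⟩ := sel d 1 (le_refl 1) hd_pos μ₁
          ((Finset.Icc 1 h).filter (fun (j:ℕ) => cycleOutDeg σ (z + (j:ZMod n)) = 1))
          (fun x _ y _ hxy => by omega) hc1Y
        have hZ₁Icc : ∀ j ∈ Z₁, 1 ≤ j ∧ j ≤ h := by
          intro j hj
          have := hZ₁S hj
          rw [Finset.mem_filter, Finset.mem_Icc] at this
          exact this.1
        have hZ₁deg : ∀ j ∈ Z₁, cycleOutDeg σ (z + (j:ZMod n)) = 1 := by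
          intro j hj
          have := hZ₁S hj
          rw [Finset.mem_filter] at this
          exact this.2
        apply glue σ z d ℓ μ₀ μ₁ μ₂ Z₀ Z₁ Z₂ ?_ ?_ hd_low hglue_ℓ hZ₀c hZ₁c hZ₂c hZ₀deg hZ₁deg hZ₂deg
        · intro j hj
          rcases Finset.mem_union.mp hj with hj' | hj'
          · rcases Finset.mem_union.mp hj' with hj'' | hj''
            · have := hZ₀S hj''; rw [Finset.mem_Icc] at this; omega
            · have := (hZ₁Icc j hj'').2; omega
          · have := hZ₂S hj'; rw [Finset.mem_Icc] at this; omega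
        · intro x hx y hy hxy
          have hmem : ∀ w, w ∈ Z₀ ∪ Z₁ ∪ Z₂ → (w ∈ Z₀ ∪ Z₂ ∧ h+d+1 ≤ w) ∨ (w ∈ Z₁ ∧ w ≤ h) := by
            intro w hw
            rcases Finset.mem_union.mp hw with hw' | hw'
            · rcases Finset.mem_union.mp hw' with hw'' | hw''
              · have := hZ₀S hw''; rw [Finset.mem_Icc] at this
                exact Or.inl ⟨Finset.mem_union_left _ hw'', this.1⟩
              · exact Or.inr ⟨hw'', (hZ₁Icc w hw'').2⟩
            · have := hZ₂S hw'; rw [Finset.mem_Icc] at this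
              exact Or.inl ⟨Finset.mem_union_right _ hw', this.1⟩
          rcases hmem x hx with ⟨hx1, hx2⟩ | ⟨hx1, hx2⟩ <;>
            rcases hmem y hy with ⟨hy1, hy2⟩ | ⟨hy1, hy2⟩
          · exact hXsep x hx1 y hy1 hxy
          · omega
          · omega
          · have := hZ₁sep x hx1 y hy1 hxy; omega
    · -- FALLBACK B : every window is deg0-rich, so m is tiny
      push_neg at hE2
      have hlb : ∀ y ∈ Finset.univ, Bhi + 1 ≤ f y := fun y _ => by have := hE2 y; omega
      have hsge := Finset.card_nsmul_le_sum Finset.univ f (Bhi+1) hlb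
      rw [hsum0, hcardu, smul_eq_mul] at hsge
      have hR : ((n*(Bhi+1):ℕ):ℝ) ≤ ((ℓ*lam:ℕ):ℝ) := Nat.cast_le.mpr hsge
      push_cast at hR
      have hmL : (m:ℝ) ≤ L := by
        have e1 : (ℓ:ℝ)*m = (ℓ:ℝ)*n - 2*((ℓ:ℝ)*lam) := by rw [hmR]; ring
        have hRexp : (n:ℝ)*(h:ℝ) - (n:ℝ)*(d:ℝ) - (n:ℝ)*(T1:ℝ) - (n:ℝ) ≤ (ℓ:ℝ)*lam := by
          have : (n:ℝ)*((Bhi:ℝ)+1) = (n:ℝ)*(h:ℝ) - (n:ℝ)*(d:ℝ) - (n:ℝ)*(T1:ℝ) - (n:ℝ) := by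
            rw [hBhiR]; ring
          linarith
        have p1 : (n:ℝ)*((ℓ:ℝ)-1)/2 ≤ (n:ℝ)*(h:ℝ) := by
          have := mul_le_mul_of_nonneg_left hhR_lo (le_of_lt hn0R)
          linarith
        have k1 : (ℓ:ℝ)*m ≤ (n:ℝ)*(2*(d:ℝ)+2*(T1:ℝ)+3) := by nlinarith
        have k2 : (n:ℝ)*(2*(d:ℝ)+2*(T1:ℝ)+3) ≤ (201*(ℓ:ℝ))*(2*(d:ℝ)+2*(T1:ℝ)+3) := by
          apply mul_le_mul_of_nonneg_right hnℓ
          positivity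
        have hℓpos : (0:ℝ) < (ℓ:ℝ) := by
          have : (1:ℝ) ≤ (ℓ:ℝ) := by exact_mod_cast hℓ1
          linarith
        have k4 : (m:ℝ) ≤ 201*(2*(d:ℝ)+2*(T1:ℝ)+3) := by
          have k3 : (ℓ:ℝ)*m ≤ (ℓ:ℝ)*(201*(2*(d:ℝ)+2*(T1:ℝ)+3)) := by
            calc (ℓ:ℝ)*m ≤ (201*(ℓ:ℝ))*(2*(d:ℝ)+2*(T1:ℝ)+3) := by linarith
            _ = (ℓ:ℝ)*(201*(2*(d:ℝ)+2*(T1:ℝ)+3)) := by ring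
          exact le_of_mul_le_mul_left k3 hℓpos
        linarith
      have hμ₁le1 : μ₁ ≤ 1 := by
        rw [hμ₁]
        apply Nat.ceil_le.mpr
        push_cast
        rw [← hmR, div_le_one hLpos]
        linarith
      have hXcount : ∀ (a : ZMod n) (u0 : ℕ), 1 ≤ u0 → u0 ≤ d+2 → T0 + 2 ≤ wc σ a 0 u0 ℓ := by
        intro a u0 hu0 hu0d
        have hpart := wc_partition σ a u0 ℓ
        have halt2 := (wc_alt σ a u0 ℓ hu0).2
        have hglob := wc_le_global σ a 1 u0 ℓ hℓn
        rw [ha1] at hglob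
        have hcard : (Finset.Icc u0 ℓ).card = ℓ + 1 - u0 := Nat.card_Icc _ _
        have hℕ : ℓ ≤ 2 * wc σ a 0 u0 ℓ + m + u0 := by omega
        have hc : ((T0+2:ℕ):ℝ) ≤ ((wc σ a 0 u0 ℓ:ℕ):ℝ) := by
          have h1 := (Nat.cast_le (α := ℝ)).mpr hℕ
          push_cast at h1 ⊢
          have hu0R : (u0:ℝ) ≤ (d:ℝ)+2 := by exact_mod_cast hu0d
          linarith
        exact_mod_cast hc
      rcases Nat.eq_zero_or_pos μ₁ with hμ0 | hμpos
      · obtain ⟨Z₀, Z₂, hZ₀S, hZ₂S, hZ₀c, hZ₂c, hZ₀deg, hZ₂deg, hXsep⟩ :=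
          extractX σ 0 1 ℓ d μ₀ μ₂ (le_refl 1) hd_pos
            (by have := hXcount 0 1 (le_refl 1) (by omega); omega)
        apply glue σ 0 d ℓ μ₀ μ₁ μ₂ Z₀ ∅ Z₂ ?_ ?_ hd_low hglue_ℓ hZ₀c (by simp [hμ0]) hZ₂c
          hZ₀deg (by simp) hZ₂deg
        · intro j hj
          simp only [Finset.union_empty] at hj
          rcases Finset.mem_union.mp hj with hj' | hj'
          · have := hZ₀S hj'; rw [Finset.mem_Icc] at this; omega
          · have := hZ₂S hj'; rw [Finset.mem_Icc] at this; omega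
        · intro x hx y hy hxy
          simp only [Finset.union_empty] at hx hy
          exact hXsep x hx y hy hxy
      · have hμ1 : μ₁ = 1 := by omega
        have hm1 : 1 ≤ m := by
          rcases Nat.eq_zero_or_pos m with hm0 | hmp
          · exfalso
            have hz0 : ((n:ℝ) - 2*lam) = 0 := by
              rw [← hmR, hm0]; simp
            rw [hz0] at hμ₁
            simp at hμ₁
            omega
          · exact hmp
        have hpos1 : 0 < (Finset.univ.filter (fun i => cycleOutDeg σ i = 1)).card := by omega
        obtain ⟨u, hu⟩ := Finset.card_pos.mp hpos1
        rw [Finset.mem_filter] at hu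
        obtain ⟨Z₀, Z₂, hZ₀S, hZ₂S, hZ₀c, hZ₂c, hZ₀deg, hZ₂deg, hXsep⟩ :=
          extractX σ (u-1) (d+2) ℓ d μ₀ μ₂ (by omega) hd_pos
            (by have := hXcount (u-1) (d+2) (by omega) (le_refl _); omega)
        have hu1 : cycleOutDeg σ ((u-1) + ((1:ℕ):ZMod n)) = 1 := by
          have heq : (u-1) + ((1:ℕ):ZMod n) = u := by push_cast; ring
          rw [heq]; exact hu.2
        apply glue σ (u-1) d ℓ μ₀ μ₁ μ₂ Z₀ {1} Z₂ ?_ ?_ hd_low hglue_ℓ hZ₀c (by simp [hμ1]) hZ₂c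
          hZ₀deg (by intro j hj; rw [Finset.mem_singleton] at hj; subst hj; exact hu1) hZ₂deg
        · intro j hj
          rcases Finset.mem_union.mp hj with hj' | hj'
          · rcases Finset.mem_union.mp hj' with hj'' | hj''
            · have := hZ₀S hj''; rw [Finset.mem_Icc] at this; omega
            · rw [Finset.mem_singleton] at hj''; omega
          · have := hZ₂S hj'; rw [Finset.mem_Icc] at this; omega
        · intro x hx y hy hxy
          have hmem : ∀ w, w ∈ Z₀ ∪ {1} ∪ Z₂ → (w ∈ Z₀ ∪ Z₂ ∧ d+2 ≤ w) ∨ w = 1 := by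
            intro w hw
            rcases Finset.mem_union.mp hw with hw' | hw'
            · rcases Finset.mem_union.mp hw' with hw'' | hw''
              · have := hZ₀S hw''; rw [Finset.mem_Icc] at this
                exact Or.inl ⟨Finset.mem_union_left _ hw'', this.1⟩
              · rw [Finset.mem_singleton] at hw''; exact Or.inr hw''
            · have := hZ₂S hw'; rw [Finset.mem_Icc] at this
              exact Or.inl ⟨Finset.mem_union_right _ hw', this.1⟩
          rcases hmem x hx with ⟨hx1, hx2⟩ | rfl <;> rcases hmem y hy with ⟨hy1, hy2⟩ | h1
          · exact hXsep x hx1 y hy1 hxy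
          · omega
          · omega
          · omega
  · -- SMALL CASE : 2λ < L
    have hlamL : 2*(lam:ℝ) ≤ L := le_of_lt hsmall
    have hs1 : μ₀ + μ₂ ≤ 1 := by
      rw [hs]
      apply Nat.ceil_le.mpr
      push_cast
      rw [div_le_one hLpos]
      linarith
    have hcases : (μ₀ = 0 ∧ μ₂ = 0) ∨ (μ₀ = 1 ∧ μ₂ = 0) ∨ (μ₀ = 0 ∧ μ₂ = 1) := by omega
    have hlam1 : μ₀ + μ₂ = 1 → 1 ≤ lam := by
      intro h1
      rcases Nat.eq_zero_or_pos lam with h | h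
      · exfalso
        rw [h] at hs
        norm_num at hs
        omega
      · exact h
    rcases hcases with ⟨h0, h2⟩ | ⟨h0, h2⟩ | ⟨h0, h2⟩
    · -- no deg-0/2 picks
      obtain ⟨Z₁, hZ₁S, hZ₁c, hZ₁deg, hZ₁sep⟩ := hselY 0 1 (le_refl 1) (by omega) hlamL
      apply glue σ 0 d ℓ μ₀ μ₁ μ₂ ∅ Z₁ ∅ ?_ ?_ hd_low hglue_ℓ (by simp [h0]) hZ₁c (by simp [h2])
        (by simp) hZ₁deg (by simp)
      · intro j hj
        simp only [Finset.union_empty, Finset.empty_union] at hj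
        have := hZ₁S hj
        rw [Finset.mem_Icc] at this
        omega
      · intro x hx y hy hxy
        simp only [Finset.union_empty, Finset.empty_union] at hx hy
        exact hZ₁sep x hx y hy hxy
    · -- one deg-0 pick
      have hlampos := hlam1 (by omega)
      have hpos0 : 0 < (Finset.univ.filter (fun i => cycleOutDeg σ i = 0)).card := by omega
      obtain ⟨v, hv⟩ := Finset.card_pos.mp hpos0
      rw [Finset.mem_filter] at hv
      obtain ⟨Z₁, hZ₁S, hZ₁c, hZ₁deg, hZ₁sep⟩ := hselY (v-1) (d+2) (by omega) (le_refl _) hlamL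
      have hv1 : cycleOutDeg σ ((v-1) + ((1:ℕ):ZMod n)) = 0 := by
        have heq : (v-1) + ((1:ℕ):ZMod n) = v := by push_cast; ring
        rw [heq]; exact hv.2
      apply glue σ (v-1) d ℓ μ₀ μ₁ μ₂ {1} Z₁ ∅ ?_ ?_ hd_low hglue_ℓ (by simp [h0]) hZ₁c (by simp [h2])
        (by intro j hj; rw [Finset.mem_singleton] at hj; subst hj; exact hv1) hZ₁deg (by simp)
      · intro j hj
        simp only [Finset.union_empty, Finset.mem_union, Finset.mem_singleton] at hj
        rcases hj with rfl | hj
        · omega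
        · have := hZ₁S hj; rw [Finset.mem_Icc] at this; omega
      · intro x hx y hy hxy
        simp only [Finset.union_empty, Finset.mem_union, Finset.mem_singleton] at hx hy
        rcases hx with rfl | hx <;> rcases hy with rfl | hy
        · omega
        · have := hZ₁S hy; rw [Finset.mem_Icc] at this; omega
        · have := hZ₁S hx; rw [Finset.mem_Icc] at this; omega
        · exact hZ₁sep x hx y hy hxy
    · -- one deg-2 pick
      have hlampos := hlam1 (by omega)
      have hpos2 : 0 < (Finset.univ.filter (fun i => cycleOutDeg σ i = 2)).card := by omega
      obtain ⟨v, hv⟩ := Finset.card_pos.mp hpos2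
      rw [Finset.mem_filter] at hv
      obtain ⟨Z₁, hZ₁S, hZ₁c, hZ₁deg, hZ₁sep⟩ := hselY (v-1) (d+2) (by omega) (le_refl _) hlamL
      have hv1 : cycleOutDeg σ ((v-1) + ((1:ℕ):ZMod n)) = 2 := by
        have heq : (v-1) + ((1:ℕ):ZMod n) = v := by push_cast; ring
        rw [heq]; exact hv.2
      apply glue σ (v-1) d ℓ μ₀ μ₁ μ₂ ∅ Z₁ {1} ?_ ?_ hd_low hglue_ℓ (by simp [h0]) hZ₁c (by simp [h2])
        (by simp) hZ₁deg
        (by intro j hj; rw [Finset.mem_singleton] at hj; subst hj; exact hv1)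
      · intro j hj
        simp only [Finset.empty_union, Finset.mem_union, Finset.mem_singleton] at hj
        rcases hj with hj | rfl
        · have := hZ₁S hj; rw [Finset.mem_Icc] at this; omega
        · omega
      · intro x hx y hy hxy
        simp only [Finset.empty_union, Finset.mem_union, Finset.mem_singleton] at hx hy
        rcases hx with hx | rfl <;> rcases hy with hy | rfl
        · exact hZ₁sep x hx y hy hxy
        · have := hZ₁S hx; rw [Finset.mem_Icc] at this; omega
        · have := hZ₁S hy; rw [Finset.mem_Icc] at this; omega
        · omega
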